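/- Let P be reversible with positive invariant distribution μ, f : S → ℝ^m with |f(s)| ≤ 1 for all s, and u ∈ ℝ^m with |u| ≤ 1. Let λ₀(u) be the largest eigenvalue (in absolute value) of the perturbed matrix P(u)_{st} = P_{st} e^{⟨f(t),u⟩}, and μ^(0) any initial distribution. Then (μ^(0), [P(u)]^N 1_S) ≤ 3 ‖μ^(0)/μ‖ λ₀(u)^N, where ‖μ^(0)/μ‖ = (Σ_s (μ^(0)_s)²/μ_s)^{1/2} and 1_S is the all-ones vector. -/

import Mathlib

open scoped Matrix

/-- If `v` is a nonzero real eigenvector of a real matrix `A` with eigenvalue `lam'`,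
and every complex eigenvalue of `A` has absolute value at most `lam`, then `|lam'| ≤ lam`. -/
lemma abs_eigenvalue_le_aux {S : Type*} [Fintype S] [DecidableEq S]
    (A : Matrix S S ℝ) (lam lam' : ℝ) (v : S → ℝ)
    (hv : v ≠ 0) (h : A.mulVec v = lam' • v)
    (h_max : ∀ (z : ℂ) (w : S → ℂ), w ≠ 0 →
      (A.map (Complex.ofReal)).mulVec w = z • w → ‖z‖ ≤ lam) :
    |lam'| ≤ lam := by
  have hvc : (fun s => (v s : ℂ)) ≠ 0 := by
    intro hc
    apply hv
    funext s
    have := congrFun hc s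
    simpa using this
  have key : (A.map (Complex.ofReal)).mulVec (fun s => (v s : ℂ))
      = (lam' : ℂ) • (fun s => (v s : ℂ)) := by
    funext s
    have h1 := congrFun h s
    simp only [Matrix.mulVec, dotProduct, Matrix.map_apply, Pi.smul_apply,
      smul_eq_mul] at h1 ⊢
    norm_cast
  simpa using h_max (lam' : ℂ) _ hvc key

/-- Lemma 8: `(μ⁰, [P(u)]^N 1_S) ≤ 3 ‖μ⁰/μ‖ λ₀(u)^N`, where `λ₀(u)` is the largest
(in absolute value) eigenvalue of the perturbed matrix `P(u)`. -/
theorem stmt_7 {S : Type*} [Fintype S] [DecidableEq S] {m : ℕ}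
    (P : Matrix S S ℝ) (μ μ0 : S → ℝ)
    (hP_nonneg : ∀ s t, 0 ≤ P s t)
    (hP_stoch : ∀ s, ∑ t, P s t = 1)
    (hμ_pos : ∀ s, 0 < μ s) (hμ_sum : ∑ s, μ s = 1)
    (h_rev : ∀ s t, μ s * P s t = μ t * P t s)
    (hμ0_nonneg : ∀ s, 0 ≤ μ0 s) (hμ0_sum : ∑ s, μ0 s = 1)
    (f : S → EuclideanSpace ℝ (Fin m)) (u : EuclideanSpace ℝ (Fin m))
    (hf : ∀ s, ‖f s‖ ≤ 1) (hu : ‖u‖ ≤ 1)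
    (Pu : Matrix S S ℝ) (hPu : Pu = fun s t => P s t * Real.exp (inner ℝ (f t) u : ℝ))
    (lam : ℝ)
    -- `lam` is an eigenvalue of `P(u)`
    (h_eig : ∃ v : S → ℝ, v ≠ 0 ∧ Pu.mulVec v = lam • v)
    -- `lam` has the largest absolute value among all (complex) eigenvalues of `P(u)`
    (h_max : ∀ (z : ℂ) (v : S → ℂ), v ≠ 0 →
      (Pu.map (Complex.ofReal)).mulVec v = z • v → ‖z‖ ≤ lam)
    (N : ℕ) :
    ∑ s, μ0 s * ((Pu ^ N).mulVec (fun _ => (1 : ℝ))) s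
      ≤ 3 * Real.sqrt (∑ s, (μ0 s) ^ 2 / μ s) * lam ^ N := by
  classical
  -- `lam` is nonnegative
  have hlam_nonneg : 0 ≤ lam := by
    obtain ⟨v, hv, hve⟩ := h_eig
    have := abs_eigenvalue_le_aux Pu lam lam v hv hve h_max
    exact le_trans (abs_nonneg lam) this
  -- basic setup
  set c : S → ℝ := fun s => (inner ℝ (f s) u : ℝ) with hc
  have hc_abs : ∀ s, |c s| ≤ 1 := by
    intro s
    calc |c s| ≤ ‖f s‖ * ‖u‖ := abs_real_inner_le_norm _ _
    _ ≤ 1 := by nlinarith [hf s, hu, norm_nonneg (f s), norm_nonneg u]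
  set d : S → ℝ := fun s => μ s * Real.exp (c s) with hd
  have hd_pos : ∀ s, 0 < d s := fun s => mul_pos (hμ_pos s) (Real.exp_pos _)
  set g : S → ℝ := fun s => Real.sqrt (d s) with hg
  have hg_pos : ∀ s, 0 < g s := fun s => Real.sqrt_pos.2 (hd_pos s)
  have hgg : ∀ s, g s * g s = d s := fun s => Real.mul_self_sqrt (hd_pos s).le
  -- conjugating matrices
  set Dg : Matrix S S ℝ := Matrix.diagonal g with hDg
  set Dg' : Matrix S S ℝ := Matrix.diagonal (fun s => (g s)⁻¹) with hDg'
  have hfun1 : (fun s => g s * (g s)⁻¹) = fun _ => (1 : ℝ) :=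
    funext fun s => mul_inv_cancel₀ (hg_pos s).ne'
  have hfun2 : (fun s => (g s)⁻¹ * g s) = fun _ => (1 : ℝ) :=
    funext fun s => inv_mul_cancel₀ (hg_pos s).ne'
  have hDgDg' : Dg * Dg' = 1 := by
    rw [hDg, hDg', Matrix.diagonal_mul_diagonal, hfun1, Matrix.diagonal_one]
  have hDg'Dg : Dg' * Dg = 1 := by
    rw [hDg, hDg', Matrix.diagonal_mul_diagonal, hfun2, Matrix.diagonal_one]
  set M : Matrix S S ℝ := Dg * Pu * Dg' with hM
  have hM_entry : ∀ s t, M s t = g s * Pu s t * (g t)⁻¹ := by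
    intro s t
    rw [hM, hDg, hDg', Matrix.mul_diagonal, Matrix.diagonal_mul]
  -- reversibility in terms of d
  have hkey : ∀ s t, d s * Pu s t = d t * Pu t s := by
    intro s t
    rw [hPu, hd]
    simp only
    calc μ s * Real.exp (c s) * (P s t * Real.exp (c t))
        = (μ s * P s t) * (Real.exp (c s) * Real.exp (c t)) := by ring
      _ = (μ t * P t s) * (Real.exp (c s) * Real.exp (c t)) := by rw [h_rev]
      _ = μ t * Real.exp (c t) * (P t s * Real.exp (c s)) := by ring
  -- M is symmetric
  have hM_herm : M.IsHermitian := by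
    refine Matrix.IsHermitian.ext fun t s => ?_
    rw [star_trivial, hM_entry, hM_entry]
    have h1 : g s * Pu s t * (g t)⁻¹ * (g s * g t) = d s * Pu s t := by
      calc g s * Pu s t * (g t)⁻¹ * (g s * g t)
          = (g s * g s) * Pu s t * ((g t)⁻¹ * g t) := by ring
        _ = d s * Pu s t := by
            rw [hgg s, inv_mul_cancel₀ (hg_pos t).ne', mul_one]
    have h2 : g t * Pu t s * (g s)⁻¹ * (g s * g t) = d t * Pu t s := by
      calc g t * Pu t s * (g s)⁻¹ * (g s * g t)
          = (g t * g t) * Pu t s * ((g s)⁻¹ * g s) := by ring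
        _ = d t * Pu t s := by
            rw [hgg t, inv_mul_cancel₀ (hg_pos s).ne', mul_one]
    have hgsgt : g s * g t ≠ 0 := (mul_pos (hg_pos s) (hg_pos t)).ne'
    apply mul_right_cancel₀ hgsgt
    rw [h1, h2, hkey s t]
  have hMT : Mᵀ = M := by
    ext s t
    rw [Matrix.transpose_apply]
    have := congrFun (congrFun hM_herm s) t
    simpa using this
  -- conjugation of powers
  have hMpow : ∀ n : ℕ, M ^ n = Dg * (Pu ^ n) * Dg' := by
    intro n
    induction n with
    | zero => simp [hDgDg']
    | succ n ih =>
        rw [pow_succ, ih, pow_succ, hM]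
        calc Dg * Pu ^ n * Dg' * (Dg * Pu * Dg')
            = Dg * Pu ^ n * (Dg' * Dg) * Pu * Dg' := by
              simp only [Matrix.mul_assoc]
          _ = Dg * (Pu ^ n * Pu) * Dg' := by
              rw [hDg'Dg, Matrix.mul_one]
              simp only [Matrix.mul_assoc]
  -- every eigenvalue of M has absolute value ≤ lam
  have hMeig : ∀ (lam' : ℝ) (w : S → ℝ), w ≠ 0 → M.mulVec w = lam' • w → |lam'| ≤ lam := by
    intro lam' w hw hwe
    set v : S → ℝ := Dg'.mulVec w with hv
    have hv_apply : ∀ s, v s = (g s)⁻¹ * w s := by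
      intro s
      rw [hv, hDg']
      simp [Matrix.mulVec_diagonal]
    have hv_ne : v ≠ 0 := by
      intro hc
      apply hw
      funext s
      have := congrFun hc s
      rw [hv_apply s] at this
      have hginv : (g s)⁻¹ ≠ 0 := inv_ne_zero (hg_pos s).ne'
      simpa [hginv] using this
    have hPuv : Pu.mulVec v = lam' • v := by
      have h1 : Pu * Dg' = Dg' * M := by
        rw [hM]
        calc Pu * Dg' = 1 * (Pu * Dg') := by rw [Matrix.one_mul]
          _ = Dg' * (Dg * Pu * Dg') := by
              rw [← hDg'Dg]
              simp only [Matrix.mul_assoc]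
      calc Pu.mulVec v = Pu.mulVec (Dg'.mulVec w) := by rw [hv]
        _ = (Pu * Dg').mulVec w := by rw [Matrix.mulVec_mulVec]
        _ = (Dg' * M).mulVec w := by rw [h1]
        _ = Dg'.mulVec (M.mulVec w) := by rw [Matrix.mulVec_mulVec]
        _ = Dg'.mulVec (lam' • w) := by rw [hwe]
        _ = lam' • v := by rw [Matrix.mulVec_smul, hv]
    exact abs_eigenvalue_le_aux Pu lam lam' v hv_ne hPuv h_max
  -- spectral decomposition of M
  set b := hM_herm.eigenvectorBasis with hb
  set ev := hM_herm.eigenvalues with hev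
  -- the eigenvectors as plain functions
  obtain ⟨bf, hbf⟩ : ∃ bf : S → S → ℝ, ∀ i, bf i = ⇑(b i) := ⟨fun i => ⇑(b i), fun _ => rfl⟩
  have hbf_apply : ∀ i s, bf i s = (b i) s := by
    intro i s; rw [hbf]
  have hbase : ∀ i, M.mulVec (bf i) = ev i • bf i := by
    intro i
    rw [hbf i]
    exact hM_herm.mulVec_eigenvectorBasis i
  have hb_ne : ∀ i, bf i ≠ 0 := by
    intro i hc
    have h1 : b i = 0 := by
      ext s
      simp [← hbf_apply i s, hc]
    have h2 := b.orthonormal.1 i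
    rw [h1] at h2
    simp at h2
  have hev_abs : ∀ i, |ev i| ≤ lam := fun i => hMeig (ev i) (bf i) (hb_ne i) (hbase i)
  have hMpow_eig : ∀ (n : ℕ) (i : S), (M ^ n).mulVec (bf i) = (ev i ^ n) • bf i := by
    intro n i
    induction n with
    | zero => simp [Matrix.one_mulVec]
    | succ n ih =>
        rw [pow_succ, ← Matrix.mulVec_mulVec, hbase i, Matrix.mulVec_smul, ih,
          smul_smul, pow_succ]
        congr 1
        ring
  -- the vectors X, Y, Z
  obtain ⟨X, hX⟩ : ∃ X : EuclideanSpace ℝ S, ∀ s, X s = μ0 s * (g s)⁻¹ :=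
    ⟨WithLp.toLp 2 (fun s => μ0 s * (g s)⁻¹), fun _ => rfl⟩
  obtain ⟨Y, hY⟩ : ∃ Y : EuclideanSpace ℝ S, ∀ s, Y s = g s :=
    ⟨WithLp.toLp 2 (fun s => g s), fun _ => rfl⟩
  have inner_sum : ∀ (a e : EuclideanSpace ℝ S), (inner ℝ a e : ℝ) = ∑ s, a s * e s := by
    intro a e
    rw [PiLp.inner_apply]
    simp [RCLike.inner_apply, mul_comm]
  obtain ⟨Z, hZdef⟩ : ∃ Z : EuclideanSpace ℝ S, Z = WithLp.toLp 2 ((M ^ N).mulVec (fun s => Y s)) :=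
    ⟨WithLp.toLp 2 ((M ^ N).mulVec (fun s => Y s)), rfl⟩
  have hZ_apply : ∀ s, Z s = g s * ((Pu ^ N).mulVec (fun _ => (1 : ℝ))) s := by
    intro s
    have : Z s = ((M ^ N).mulVec (fun s => Y s)) s := by rw [hZdef]
    rw [this, hMpow, ← Matrix.mulVec_mulVec, ← Matrix.mulVec_mulVec]
    have hDg'Y : Dg'.mulVec (fun s => Y s) = fun _ => (1 : ℝ) := by
      funext t
      rw [hDg']
      simp only [Matrix.mulVec_diagonal, hY]
      exact inv_mul_cancel₀ (hg_pos t).ne'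
    rw [hDg'Y, hDg]
    simp [Matrix.mulVec_diagonal]
  have hLHS : ∑ s, μ0 s * ((Pu ^ N).mulVec (fun _ => (1 : ℝ))) s = (inner ℝ X Z : ℝ) := by
    rw [inner_sum]
    apply Finset.sum_congr rfl
    intro s _
    rw [hZ_apply s, hX s]
    calc μ0 s * ((Pu ^ N).mulVec (fun _ => (1:ℝ))) s
        = (μ0 s * ((g s)⁻¹ * g s)) * ((Pu ^ N).mulVec (fun _ => (1:ℝ))) s := by
          rw [inv_mul_cancel₀ (hg_pos s).ne', mul_one]
      _ = μ0 s * (g s)⁻¹ * (g s * ((Pu ^ N).mulVec (fun _ => (1:ℝ))) s) := by ring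
  -- expand via the eigenbasis
  have hbZ : ∀ i, (inner ℝ (b i) Z : ℝ) = (ev i ^ N) * (inner ℝ (b i) Y : ℝ) := by
    intro i
    rw [inner_sum, inner_sum]
    have hsym : ∑ s, (b i) s * Z s = ∑ s, ((M ^ N).mulVec (bf i)) s * Y s := by
      have e1 : ∑ s, (b i) s * Z s = (bf i) ⬝ᵥ ((M ^ N).mulVec (fun s => Y s)) := by
        rw [hZdef]
        apply Finset.sum_congr rfl
        intro s _
        rw [hbf_apply]
      rw [e1, Matrix.dotProduct_mulVec, ← Matrix.mulVec_transpose,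
        Matrix.transpose_pow, hMT]
      rfl
    rw [hsym, hMpow_eig N i, Finset.mul_sum]
    apply Finset.sum_congr rfl
    intro s _
    rw [Pi.smul_apply, smul_eq_mul, hbf_apply, mul_assoc]
  have hinner_expand : (inner ℝ X Z : ℝ)
      = ∑ i, (ev i ^ N) * ((inner ℝ X (b i) : ℝ) * (inner ℝ (b i) Y : ℝ)) := by
    rw [← b.sum_inner_mul_inner X Z]
    apply Finset.sum_congr rfl
    intro i _
    rw [hbZ i]
    ring
  -- Cauchy-Schwarz and Parseval
  have hA_nonneg : 0 ≤ ∑ s, (μ0 s) ^ 2 / μ s := by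
    apply Finset.sum_nonneg
    intro s _
    exact div_nonneg (sq_nonneg _) (hμ_pos s).le
  have hParsevalX : ∑ i, (inner ℝ X (b i) : ℝ) ^ 2 = ∑ s, (X s) ^ 2 := by
    have h0 := b.sum_inner_mul_inner X X
    rw [inner_sum X X] at h0
    calc ∑ i, (inner ℝ X (b i) : ℝ) ^ 2
        = ∑ i, (inner ℝ X (b i) : ℝ) * (inner ℝ (b i) X : ℝ) := by
          apply Finset.sum_congr rfl
          intro i _
          rw [sq, real_inner_comm (b i) X]
      _ = ∑ s, X s * X s := h0
      _ = ∑ s, (X s) ^ 2 := by simp [sq]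
  have hParsevalY : ∑ i, (inner ℝ (b i) Y : ℝ) ^ 2 = ∑ s, (Y s) ^ 2 := by
    have h0 := b.sum_inner_mul_inner Y Y
    rw [inner_sum Y Y] at h0
    calc ∑ i, (inner ℝ (b i) Y : ℝ) ^ 2
        = ∑ i, (inner ℝ Y (b i) : ℝ) * (inner ℝ (b i) Y : ℝ) := by
          apply Finset.sum_congr rfl
          intro i _
          rw [sq, real_inner_comm (b i) Y]
      _ = ∑ s, Y s * Y s := h0
      _ = ∑ s, (Y s) ^ 2 := by simp [sq]
  -- bound on the X-norm
  have hXbound : ∑ s, (X s) ^ 2 ≤ Real.exp 1 * ∑ s, (μ0 s) ^ 2 / μ s := by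
    rw [Finset.mul_sum]
    apply Finset.sum_le_sum
    intro s _
    rw [hX s, mul_pow, sq ((g s)⁻¹), ← mul_inv, hgg s, hd]
    simp only
    have h1 : (μ s * Real.exp (c s))⁻¹ = (Real.exp (c s))⁻¹ * (μ s)⁻¹ := by
      rw [mul_inv, mul_comm]
    rw [h1]
    have h2 : (Real.exp (c s))⁻¹ ≤ Real.exp 1 := by
      rw [← Real.exp_neg]
      apply Real.exp_le_exp.2
      have := (abs_le.1 (hc_abs s)).1
      linarith
    have h3 : (0:ℝ) ≤ (μ0 s)^2 * (μ s)⁻¹ :=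
      mul_nonneg (sq_nonneg _) (inv_nonneg.2 (hμ_pos s).le)
    calc (μ0 s)^2 * ((Real.exp (c s))⁻¹ * (μ s)⁻¹)
        = (Real.exp (c s))⁻¹ * ((μ0 s)^2 * (μ s)⁻¹) := by ring
      _ ≤ Real.exp 1 * ((μ0 s)^2 * (μ s)⁻¹) := mul_le_mul_of_nonneg_right h2 h3
      _ = Real.exp 1 * ((μ0 s)^2 / μ s) := by rw [div_eq_mul_inv]
  have hYbound : ∑ s, (Y s) ^ 2 ≤ Real.exp 1 := by
    calc ∑ s, (Y s) ^ 2 = ∑ s, d s := by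
          apply Finset.sum_congr rfl
          intro s _
          rw [hY s, sq, hgg]
      _ = ∑ s, μ s * Real.exp (c s) := by rw [hd]
      _ ≤ ∑ s, μ s * Real.exp 1 := by
          apply Finset.sum_le_sum
          intro s _
          apply mul_le_mul_of_nonneg_left _ (hμ_pos s).le
          apply Real.exp_le_exp.2
          exact (abs_le.1 (hc_abs s)).2
      _ = Real.exp 1 := by rw [← Finset.sum_mul, hμ_sum, one_mul]
  -- put it together
  rw [hLHS, hinner_expand]
  have step1 : ∑ i, (ev i ^ N) * ((inner ℝ X (b i) : ℝ) * (inner ℝ (b i) Y : ℝ))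
      ≤ lam ^ N * ∑ i, |(inner ℝ X (b i) : ℝ)| * |(inner ℝ (b i) Y : ℝ)| := by
    rw [Finset.mul_sum]
    apply Finset.sum_le_sum
    intro i _
    calc (ev i ^ N) * ((inner ℝ X (b i) : ℝ) * (inner ℝ (b i) Y : ℝ))
        ≤ |(ev i ^ N) * ((inner ℝ X (b i) : ℝ) * (inner ℝ (b i) Y : ℝ))| := le_abs_self _
      _ = |ev i| ^ N * (|(inner ℝ X (b i) : ℝ)| * |(inner ℝ (b i) Y : ℝ)|) := by
          rw [abs_mul, abs_mul, abs_pow]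
      _ ≤ lam ^ N * (|(inner ℝ X (b i) : ℝ)| * |(inner ℝ (b i) Y : ℝ)|) := by
          apply mul_le_mul_of_nonneg_right
          · exact pow_le_pow_left₀ (abs_nonneg _) (hev_abs i) N
          · positivity
  have step2 : ∑ i, |(inner ℝ X (b i) : ℝ)| * |(inner ℝ (b i) Y : ℝ)|
      ≤ Real.sqrt (∑ i, (inner ℝ X (b i) : ℝ)^2) * Real.sqrt (∑ i, (inner ℝ (b i) Y : ℝ)^2) := by
    have h0 := Real.sum_mul_le_sqrt_mul_sqrt Finset.univ
      (fun i => |(inner ℝ X (b i) : ℝ)|) (fun i => |(inner ℝ (b i) Y : ℝ)|)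
    simpa [sq_abs] using h0
  have step3 : Real.sqrt (∑ i, (inner ℝ X (b i) : ℝ)^2) * Real.sqrt (∑ i, (inner ℝ (b i) Y : ℝ)^2)
      ≤ Real.sqrt (Real.exp 1 * ∑ s, (μ0 s) ^ 2 / μ s) * Real.sqrt (Real.exp 1) := by
    apply mul_le_mul
    · apply Real.sqrt_le_sqrt
      rw [hParsevalX]; exact hXbound
    · apply Real.sqrt_le_sqrt
      rw [hParsevalY]; exact hYbound
    · positivity
    · positivity
  have step4 : Real.sqrt (Real.exp 1 * ∑ s, (μ0 s) ^ 2 / μ s) * Real.sqrt (Real.exp 1)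
      ≤ 3 * Real.sqrt (∑ s, (μ0 s) ^ 2 / μ s) := by
    rw [Real.sqrt_mul (Real.exp_pos 1).le]
    have h1 : Real.sqrt (Real.exp 1) * Real.sqrt (Real.exp 1) = Real.exp 1 :=
      Real.mul_self_sqrt (Real.exp_pos 1).le
    have h2 : Real.exp 1 ≤ 3 := by
      have := Real.exp_one_lt_d9
      linarith
    calc Real.sqrt (Real.exp 1) * Real.sqrt (∑ s, (μ0 s) ^ 2 / μ s) * Real.sqrt (Real.exp 1)
        = (Real.sqrt (Real.exp 1) * Real.sqrt (Real.exp 1)) * Real.sqrt (∑ s, (μ0 s) ^ 2 / μ s) := by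
          ring
      _ = Real.exp 1 * Real.sqrt (∑ s, (μ0 s) ^ 2 / μ s) := by rw [h1]
      _ ≤ 3 * Real.sqrt (∑ s, (μ0 s) ^ 2 / μ s) :=
          mul_le_mul_of_nonneg_right h2 (Real.sqrt_nonneg _)
  calc ∑ i, (ev i ^ N) * ((inner ℝ X (b i) : ℝ) * (inner ℝ (b i) Y : ℝ))
      ≤ lam ^ N * ∑ i, |(inner ℝ X (b i) : ℝ)| * |(inner ℝ (b i) Y : ℝ)| := step1
    _ ≤ lam ^ N * (Real.sqrt (Real.exp 1 * ∑ s, (μ0 s) ^ 2 / μ s) * Real.sqrt (Real.exp 1)) := by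
        apply mul_le_mul_of_nonneg_left (le_trans step2 step3) (by positivity)
    _ ≤ lam ^ N * (3 * Real.sqrt (∑ s, (μ0 s) ^ 2 / μ s)) := by
        apply mul_le_mul_of_nonneg_left step4 (by positivity)
    _ = 3 * Real.sqrt (∑ s, (μ0 s) ^ 2 / μ s) * lam ^ N := by ring
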